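/- Let G₁ be a full-integer labeled unbounded granularity and G₂ an unbounded label-aligned subgranularity of G₁, with ⊥ grouping periodically into G₁ with period length P_{G₁} and into G₂ with period length P_{G₂}, let G' = Anchored-group(G₁, G₂), and let P_{G'} = lcm(P_{G₁}, P_{G₂}). Then L̂_{G'}^{P_{G'}} = L̂_{G₂}^{P_{G'}} if l_{G₂} = l_{G₁}, and L̂_{G'}^{P_{G'}} = {l'_{G₂}} ∪ L̂_{G₂}^{P_{G'}} otherwise, where l'_{G₂} is the greatest label of L_{G₂} smaller than l_{G₂}. -/

import Mathlib

/-- A labeled granularity over a linearly ordered time domain `T`: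
a label set `labels ⊆ ℤ` and a map `gran` assigning to each label a granule
(a subset of `T`); granules are empty outside the label set, granules with
larger labels come later, and between two non-empty granules all granules
(with label in the label set) are non-empty. -/
structure Granularity (T : Type*) [LinearOrder T] where
  labels : Set ℤ
  gran : ℤ → Set T
  empty_outside : ∀ i, i ∉ labels → gran i = ∅
  mono : ∀ i ∈ labels, ∀ j ∈ labels, i < j → (gran i).Nonempty → (gran j).Nonempty →
    ∀ x ∈ gran i, ∀ y ∈ gran j, x < y
  no_gaps : ∀ i ∈ labels, ∀ j ∈ labels, i < j → (gran i).Nonempty → (gran j).Nonempty →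
    ∀ k ∈ labels, i < k → k < j → (gran k).Nonempty

variable {T : Type*} [LinearOrder T]

/-- `G` is full-integer labeled. -/
def FullInteger (G : Granularity T) : Prop := G.labels = Set.univ

/-- `G` is unbounded: the label set has no least and no greatest element, and
no granule of `G` is empty. -/
def Unbounded (G : Granularity T) : Prop :=
  (∀ i ∈ G.labels, ∃ j ∈ G.labels, j < i) ∧
  (∀ i ∈ G.labels, ∃ j ∈ G.labels, i < j) ∧
  (∀ i ∈ G.labels, (G.gran i).Nonempty)

/-- `G` groups into `H`: every non-empty granule of `H` is a union of granules of `G`. -/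
def GroupsInto (G H : Granularity T) : Prop :=
  ∀ j ∈ H.labels, (H.gran j).Nonempty →
    ∃ S ⊆ G.labels, H.gran j = ⋃ i ∈ S, G.gran i

/-- `G` groups periodically into `H` with period length `P` and
period label distance `N`. -/
def GroupsPeriodicallyInto (G H : Granularity T) (P N : ℤ) : Prop :=
  GroupsInto G H ∧ 0 < P ∧ 0 < N ∧
  (∀ i ∈ H.labels, i + N ∈ H.labels ∨ ∃ g, IsGreatest H.labels g ∧ g < i + N) ∧
  (∀ i ∈ H.labels, ∀ k : ℕ, ∀ j : ℕ → ℤ,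
    (∀ r ≤ k, j r ∈ G.labels) →
    H.gran i = ⋃ r ∈ Finset.range (k + 1), G.gran (j r) →
    i + N ∈ H.labels → (H.gran (i + N)).Nonempty →
    (∀ r ≤ k, j r + P ∈ G.labels) ∧
      H.gran (i + N) = ⋃ r ∈ Finset.range (k + 1), G.gran (j r + P)) ∧
  (∀ s, IsLeast {i | i ∈ H.labels ∧ (H.gran i).Nonempty} s →
    s + N ∈ H.labels ∧ (H.gran (s + N)).Nonempty)

/-- `B` is a bottom granularity: full-integer labeled with all granules non-empty.
(That it groups into the granularities under consideration is stated separately.) -/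
def IsBottom (B : Granularity T) : Prop :=
  B.labels = Set.univ ∧ ∀ i, (B.gran i).Nonempty

/-- `up(z)_G^H = z'`: `z'` is the unique label of `H` whose granule contains `G(z)`. -/
def UpDef (G H : Granularity T) (z z' : ℤ) : Prop :=
  z ∈ G.labels ∧ z' ∈ H.labels ∧ G.gran z ⊆ H.gran z' ∧
  ∀ w ∈ H.labels, G.gran z ⊆ H.gran w → w = z'

/-- `l_G = lG`: `lG = up(i)_⊥^G` where `i` is the smallest positive integer for
which `up(i)_⊥^G` is defined (`B` plays the role of `⊥`). -/
def IsFirstLabel (B G : Granularity T) (lG : ℤ) : Prop :=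
  ∃ i : ℤ, 0 < i ∧ UpDef B G i lG ∧
    ∀ i', 0 < i' → (∃ z', UpDef B G i' z') → i ≤ i'

/-- `L̂_G^P`: the set of labels `i ∈ L_G` such that `⊥(n) ⊆ G(i)` for some
`n` with `1 ≤ n ≤ P` (`B` plays the role of `⊥`). -/
def LHat (B G : Granularity T) (P : ℤ) : Set ℤ :=
  {i | i ∈ G.labels ∧ ∃ n : ℤ, 1 ≤ n ∧ n ≤ P ∧ B.gran n ⊆ G.gran i}

/-- `G` is finer than `H`: every granule of `G` is contained in some granule of `H`. -/
def FinerThan (G H : Granularity T) : Prop :=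
  ∀ i ∈ G.labels, ∃ j ∈ H.labels, G.gran i ⊆ H.gran j

/-- `G` partitions `H`. -/
def Partitions (G H : Granularity T) : Prop :=
  GroupsInto G H ∧ FinerThan G H

/-- `G₁` is a label-aligned subgranularity of `G₂`. -/
def LabelAlignedSub (G₁ G₂ : Granularity T) : Prop :=
  G₁.labels ⊆ G₂.labels ∧ ∀ i ∈ G₁.labels, (G₁.gran i).Nonempty → G₁.gran i = G₂.gran i

/-- `Δ_k^l(S)`: the elements of the ordered set `S` occupying positions
`k, k+1, …, k+l−1`, positions counted (1-based) from the first element when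
`k > 0` and (negatively, `-1`-based) from the last element backwards when `k < 0`. -/
def Delta (k l : ℤ) (S : Set ℤ) : Set ℤ :=
  {a ∈ S | ∃ p : ℤ,
    ((0 < k ∧ 1 ≤ p ∧ {x ∈ S | x ≤ a}.Finite ∧ ({x ∈ S | x ≤ a}.ncard : ℤ) = p) ∨
     (k < 0 ∧ p ≤ -1 ∧ {x ∈ S | a ≤ x}.Finite ∧ ({x ∈ S | a ≤ x}.ncard : ℤ) = -p)) ∧
    k ≤ p ∧ p ≤ k + l - 1}

private lemma gran_disj_lbl (G : Granularity T) (hfull : G.labels = Set.univ)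
    (hne : ∀ i, (G.gran i).Nonempty) {a b : ℤ} {t : T}
    (ha : t ∈ G.gran a) (hb : t ∈ G.gran b) : a = b := by
  by_contra hab
  rcases Ne.lt_or_gt hab with h | h
  · exact lt_irrefl t
      (G.mono a (by simp [hfull]) b (by simp [hfull]) h (hne a) (hne b) t ha t hb)
  · exact lt_irrefl t
      (G.mono b (by simp [hfull]) a (by simp [hfull]) h (hne b) (hne a) t hb t ha)

private lemma up_mono_lbl (B G : Granularity T)
    (hBfull : B.labels = Set.univ) (hBne : ∀ i, (B.gran i).Nonempty)
    (hGfull : G.labels = Set.univ) (hGne : ∀ i, (G.gran i).Nonempty)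
    {m n a b : ℤ} (hm : B.gran m ⊆ G.gran a) (hn : B.gran n ⊆ G.gran b)
    (hmn : m ≤ n) : a ≤ b := by
  by_contra hba
  push_neg at hba
  obtain ⟨x, hx⟩ := hBne m
  obtain ⟨y, hy⟩ := hBne n
  rcases eq_or_lt_of_le hmn with rfl | hlt
  · exact hba.ne' (gran_disj_lbl G hGfull hGne (hm hx) (hn hx))
  · have h1 : x < y :=
      B.mono m (by simp [hBfull]) n (by simp [hBfull]) hlt (hBne m) (hBne n) x hx y hy
    have h2 : y < x :=
      G.mono b (by simp [hGfull]) a (by simp [hGfull]) hba (hGne b) (hGne a) y (hn hy) x (hm hx)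
    exact absurd h1 (not_lt.2 h2.le)

theorem anchored_group_labels (B G₁ G₂ G' : Granularity T)
    (P₁ N₁ P₂ N₂ lG1 lG2 : ℤ)
    (hB : IsBottom B)
    (hG₁full : FullInteger G₁) (h₁u : Unbounded G₁) (h₂u : Unbounded G₂)
    (hsub : LabelAlignedSub G₂ G₁)
    (h₁ : GroupsPeriodicallyInto B G₁ P₁ N₁)
    (h₂ : GroupsPeriodicallyInto B G₂ P₂ N₂)
    (hlab : G'.labels = G₂.labels)
    (hgran : ∀ i ∈ G'.labels, ∀ i', IsLeast {w ∈ G₂.labels | i < w} i' →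
        G'.gran i = ⋃ j ∈ Finset.Icc i (i' - 1), G₁.gran j)
    (hlG1 : IsFirstLabel B G₁ lG1) (hlG2 : IsFirstLabel B G₂ lG2) :
    (lG2 = lG1 →
      LHat B G' ((Int.lcm P₁ P₂ : ℤ)) = LHat B G₂ ((Int.lcm P₁ P₂ : ℤ))) ∧
    (lG2 ≠ lG1 → ∀ lG2' : ℤ, IsGreatest {w ∈ G₂.labels | w < lG2} lG2' →
      LHat B G' ((Int.lcm P₁ P₂ : ℤ)) =
        insert lG2' (LHat B G₂ ((Int.lcm P₁ P₂ : ℤ)))) := by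
  
  classical
  obtain ⟨hBfull, hBne⟩ := hB
  have hG1full : G₁.labels = Set.univ := hG₁full
  have hG1ne : ∀ i, (G₁.gran i).Nonempty := fun i => h₁u.2.2 i (by simp [hG1full])
  have hG2ne : ∀ i ∈ G₂.labels, (G₂.gran i).Nonempty := h₂u.2.2
  have hEq : ∀ i ∈ G₂.labels, G₂.gran i = G₁.gran i := fun i hi => hsub.2 i hi (hG2ne i hi)
  have upm := fun {m n a b : ℤ} => up_mono_lbl B G₁ hBfull hBne hG1full hG1ne (m := m) (n := n) (a := a) (b := b)
  -- absorption: a bottom granule meeting a G₁ granule is contained in it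
  have habs : ∀ n jj (t : T), t ∈ B.gran n → t ∈ G₁.gran jj → B.gran n ⊆ G₁.gran jj := by
    intro n jj t htB htG
    obtain ⟨S, -, hS⟩ := h₁.1 jj (by simp [hG1full]) (hG1ne jj)
    rw [hS] at htG
    simp only [Set.mem_iUnion] at htG
    obtain ⟨m, hmS, htm⟩ := htG
    have hnm : n = m := gran_disj_lbl B hBfull hBne htB htm
    subst hnm
    rw [hS]
    exact Set.subset_biUnion_of_mem hmS
  have hsupp1 : ∀ jj : ℤ, ∃ m, B.gran m ⊆ G₁.gran jj := by
    intro jj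
    obtain ⟨t, ht⟩ := hG1ne jj
    obtain ⟨S, -, hS⟩ := h₁.1 jj (by simp [hG1full]) (hG1ne jj)
    have ht' := ht
    rw [hS] at ht'
    simp only [Set.mem_iUnion] at ht'
    obtain ⟨m, hmS, htm⟩ := ht'
    exact ⟨m, habs m jj t htm ht⟩
  obtain ⟨n₁, hn₁pos, hup₁, hmin₁⟩ := hlG1
  obtain ⟨n₂, hn₂pos, hup₂, hmin₂⟩ := hlG2
  have hn₁sub : B.gran n₁ ⊆ G₁.gran lG1 := hup₁.2.2.1
  have hlG2mem : lG2 ∈ G₂.labels := hup₂.2.1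
  have hn₂sub2 : B.gran n₂ ⊆ G₂.gran lG2 := hup₂.2.2.1
  have hn₂sub : B.gran n₂ ⊆ G₁.gran lG2 := by rw [← hEq lG2 hlG2mem]; exact hn₂sub2
  have hmkUp1 : ∀ n jj, B.gran n ⊆ G₁.gran jj → UpDef B G₁ n jj := by
    intro n jj h
    refine ⟨by simp [hBfull], by simp [hG1full], h, ?_⟩
    intro w _ hw
    obtain ⟨t, ht⟩ := hBne n
    exact gran_disj_lbl G₁ hG1full hG1ne (hw ht) (h ht)
  have hmin₁' : ∀ n, 0 < n → ∀ jj, B.gran n ⊆ G₁.gran jj → n₁ ≤ n := by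
    intro n hn jj h
    exact hmin₁ n hn ⟨jj, hmkUp1 n jj h⟩
  have hmin₂' : ∀ n, 0 < n → ∀ i, i ∈ G₂.labels → B.gran n ⊆ G₂.gran i → n₂ ≤ n := by
    intro n hn i hi h
    refine hmin₂ n hn ⟨i, ⟨by simp [hBfull], hi, h, ?_⟩⟩
    intro w hw hsubw
    obtain ⟨t, ht⟩ := hBne n
    have h1 : t ∈ G₁.gran w := by rw [← hEq w hw]; exact hsubw ht
    have h2 : t ∈ G₁.gran i := by rw [← hEq i hi]; exact h ht
    exact gran_disj_lbl G₁ hG1full hG1ne h1 h2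
  have hn₁n₂ : n₁ ≤ n₂ := hmin₁' n₂ hn₂pos lG2 hn₂sub
  have hl12 : lG1 ≤ lG2 := upm hn₁sub hn₂sub hn₁n₂
  have hP₁pos : (0:ℤ) < P₁ := h₁.2.1
  have hP₂pos : (0:ℤ) < P₂ := h₂.2.1
  -- periodicity gives n₁ ≤ P₁
  have hn₁P₁ : n₁ ≤ P₁ := by
    by_contra hgt
    push_neg at hgt
    obtain ⟨S, -, hS⟩ := h₁.1 (lG1 - N₁) (by simp [hG1full]) (hG1ne _)
    obtain ⟨a, ha⟩ := hsupp1 (lG1 - N₁ - 1)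
    obtain ⟨b, hb⟩ := hsupp1 (lG1 - N₁ + 1)
    have hmemsub : ∀ m ∈ S, B.gran m ⊆ G₁.gran (lG1 - N₁) := by
      intro m hm
      rw [hS]
      exact Set.subset_biUnion_of_mem hm
    have hbound : S ⊆ Set.Ioo a b := by
      intro m hm
      have hsubm := hmemsub m hm
      constructor
      · by_contra h; push_neg at h
        have := upm hsubm ha h
        omega
      · by_contra h; push_neg at h
        have := upm hb hsubm h
        omega
    have hfin : S.Finite := (Set.finite_Ioo a b).subset hbound
    have hSne : S.Nonempty := by
      obtain ⟨t, ht⟩ := hG1ne (lG1 - N₁)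
      have ht' := ht
      rw [hS] at ht'
      simp only [Set.mem_iUnion] at ht'
      obtain ⟨m, hm, -⟩ := ht'
      exact ⟨m, hm⟩
    set F := hfin.toFinset with hF
    have hFne : F.Nonempty := by
      obtain ⟨m, hm⟩ := hSne
      exact ⟨m, hfin.mem_toFinset.mpr hm⟩
    have hcard : 0 < F.card := Finset.card_pos.mpr hFne
    have hlen : F.toList.length = F.card := Finset.length_toList F
    set k : ℕ := F.toList.length - 1 with hk
    have hk1 : k + 1 = F.toList.length := by omega
    set j : ℕ → ℤ := fun r => F.toList.getD r 0 with hj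
    have hjS : ∀ r, r < F.toList.length → j r ∈ S := by
      intro r hr
      have hget : j r = F.toList.get ⟨r, hr⟩ := List.getD_eq_get (l := F.toList) (d := 0) ⟨r, hr⟩
      rw [hget]
      have hmem : F.toList.get ⟨r, hr⟩ ∈ F := by
        rw [← Finset.mem_toList]
        exact List.get_mem F.toList _
      exact hfin.mem_toFinset.mp hmem
    have hcover : G₁.gran (lG1 - N₁) = ⋃ r ∈ Finset.range (k + 1), B.gran (j r) := by
      rw [hS]
      ext t
      simp only [Set.mem_iUnion, Finset.mem_range]
      constructor
      · rintro ⟨m, hm, htm⟩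
        have hmF : m ∈ F := hfin.mem_toFinset.mpr hm
        have hml : m ∈ F.toList := Finset.mem_toList.mpr hmF
        obtain ⟨⟨r, hr⟩, hget⟩ := List.mem_iff_get.mp hml
        refine ⟨r, by omega, ?_⟩
        have : j r = F.toList.get ⟨r, hr⟩ := List.getD_eq_get (l := F.toList) (d := 0) ⟨r, hr⟩
        rw [this, hget]
        exact htm
      · rintro ⟨r, hr, htr⟩
        exact ⟨j r, hjS r (by omega), htr⟩
    have hc5 := h₁.2.2.2.2.1 (lG1 - N₁) (by simp [hG1full]) k j
      (by intro r _; simp [hBfull]) hcover (by simp [hG1full]) (hG1ne _)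
    obtain ⟨-, heq2⟩ := hc5
    have hlg : lG1 - N₁ + N₁ = lG1 := by ring
    rw [hlg] at heq2
    obtain ⟨t, ht⟩ := hBne n₁
    have htG : t ∈ G₁.gran lG1 := hn₁sub ht
    rw [heq2] at htG
    simp only [Set.mem_iUnion, Finset.mem_range] at htG
    obtain ⟨r, hr, htr⟩ := htG
    have hneq : n₁ = j r + P₁ := gran_disj_lbl B hBfull hBne ht htr
    have hjr : j r ∈ S := hjS r (by omega)
    have hsubjr : B.gran (j r) ⊆ G₁.gran (lG1 - N₁) := hmemsub _ hjr
    have hjrpos : 0 < j r := by omega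
    have := hmin₁' (j r) hjrpos _ hsubjr
    omega
  have hP'pos : (0:ℤ) < (Int.lcm P₁ P₂ : ℤ) := by
    have h1 : P₁ ≠ 0 := ne_of_gt hP₁pos
    have h2 : P₂ ≠ 0 := ne_of_gt hP₂pos
    have hnz : Int.lcm P₁ P₂ ≠ 0 := by
      rw [Int.lcm]
      exact Nat.lcm_ne_zero (Int.natAbs_ne_zero.mpr h1) (Int.natAbs_ne_zero.mpr h2)
    exact_mod_cast Nat.pos_of_ne_zero hnz
  have hn₁P' : n₁ ≤ (Int.lcm P₁ P₂ : ℤ) :=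
    le_trans hn₁P₁ (Int.le_of_dvd hP'pos ((Int.dvd_lcm_left P₁ P₂ : P₁ ∣ (Int.lcm P₁ P₂ : ℤ))))
  -- next labels exist
  have hnext : ∀ i ∈ G₂.labels, ∃ i', IsLeast {w ∈ G₂.labels | i < w} i' := by
    intro i hi
    obtain ⟨jb, hjb, hij⟩ := h₂u.2.1 i hi
    obtain ⟨lb, hlb, hleast⟩ := Int.exists_least_of_bdd
      (P := fun w => w ∈ G₂.labels ∧ i < w) ⟨i, fun z hz => hz.2.le⟩ ⟨jb, hjb, hij⟩
    exact ⟨lb, hlb, fun w hw => hleast w hw⟩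
  -- main case analysis
  have hmain : ∀ i ∈ G₂.labels, ∀ i', IsLeast {w ∈ G₂.labels | i < w} i' →
      ∀ n jj, 1 ≤ n → n ≤ (Int.lcm P₁ P₂ : ℤ) → i ≤ jj → jj ≤ i' - 1 →
      B.gran n ⊆ G₁.gran jj →
      (∃ m, 1 ≤ m ∧ m ≤ (Int.lcm P₁ P₂ : ℤ) ∧ B.gran m ⊆ G₂.gran i) ∨
      (lG2 ≠ lG1 ∧ i < lG2 ∧ ∀ w ∈ G₂.labels, w < lG2 → w ≤ i) := by
    intro i hi i' hi' n jj hn1 hnP hijj hjji' hsubn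
    obtain ⟨m₀, hm₀⟩ := hsupp1 i
    have hm₀2 : B.gran m₀ ⊆ G₂.gran i := by rw [hEq i hi]; exact hm₀
    rcases lt_or_ge (Int.lcm P₁ P₂ : ℤ) m₀ with hbig | hle
    · have hjji : jj ≤ i := upm hsubn hm₀ (by omega)
      have hji : jj = i := le_antisymm hjji hijj
      left
      exact ⟨n, hn1, hnP, by rw [hEq i hi]; exact hji ▸ hsubn⟩
    · rcases lt_or_ge 0 m₀ with hpos | hnonpos
      · left; exact ⟨m₀, by omega, hle, hm₀2⟩
      · have hilG1 : i ≤ lG1 := upm hm₀ hn₁sub (by omega)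
        have hn₁n : n₁ ≤ n := hmin₁' n (by omega) jj hsubn
        have hlG1jj : lG1 ≤ jj := upm hn₁sub hsubn hn₁n
        by_cases hc : lG2 = lG1
        · have hlG2i : lG2 ≤ i := by
            by_contra hlt; push_neg at hlt
            have := hi'.2 ⟨hlG2mem, hlt⟩
            omega
          have hieq : i = lG2 := by omega
          rcases le_or_gt n₂ (Int.lcm P₁ P₂ : ℤ) with hsm | hlg
          · left; exact ⟨n₂, by omega, hsm, by rw [hieq]; exact hn₂sub2⟩
          · have hjj2 : jj ≤ lG2 := upm hsubn hn₂sub (by omega)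
            have hji : jj = i := by omega
            left; exact ⟨n, hn1, hnP, by rw [hEq i hi]; exact hji ▸ hsubn⟩
        · right
          refine ⟨hc, by omega, ?_⟩
          intro w hw hwlt
          by_contra hiw; push_neg at hiw
          have hi'w : i' ≤ w := hi'.2 ⟨hw, hiw⟩
          obtain ⟨mw, hmw⟩ := hsupp1 w
          have hn₁mw : n₁ < mw := by
            by_contra hle'; push_neg at hle'
            have := upm hmw hn₁sub hle'
            omega
          have hmw2 : B.gran mw ⊆ G₂.gran w := by rw [hEq w hw]; exact hmw
          have hn₂mw : n₂ ≤ mw := hmin₂' mw (by omega) w hw hmw2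
          have := upm hn₂sub hmw hn₂mw
          omega
  -- L̂_{G₂} ⊆ L̂_{G'}
  have hsub21 : LHat B G₂ ((Int.lcm P₁ P₂ : ℤ)) ⊆ LHat B G' ((Int.lcm P₁ P₂ : ℤ)) := by
    rintro i ⟨hi, n, hn1, hn2, hnsub⟩
    obtain ⟨i', hi'⟩ := hnext i hi
    have hii' : i < i' := hi'.1.2
    refine ⟨by rw [hlab]; exact hi, n, hn1, hn2, ?_⟩
    rw [hgran i (by rw [hlab]; exact hi) i' hi']
    intro t ht
    simp only [Set.mem_iUnion]
    exact ⟨i, Finset.mem_Icc.mpr (by omega), by rw [← hEq i hi]; exact hnsub ht⟩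
  -- decomposition of membership in L̂_{G'}
  have hfwd : ∀ i, i ∈ LHat B G' ((Int.lcm P₁ P₂ : ℤ)) →
      i ∈ G₂.labels ∧
      ((∃ m, 1 ≤ m ∧ m ≤ (Int.lcm P₁ P₂ : ℤ) ∧ B.gran m ⊆ G₂.gran i) ∨
       (lG2 ≠ lG1 ∧ i < lG2 ∧ ∀ w ∈ G₂.labels, w < lG2 → w ≤ i)) := by
    rintro i ⟨hi', n, hn1, hn2, hnsub⟩
    have hi : i ∈ G₂.labels := by rw [← hlab]; exact hi'
    obtain ⟨i'', hnx⟩ := hnext i hi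
    rw [hgran i hi' i'' hnx] at hnsub
    obtain ⟨t, ht⟩ := hBne n
    have htu := hnsub ht
    simp only [Set.mem_iUnion] at htu
    obtain ⟨jj, hjjmem, htj⟩ := htu
    rw [Finset.mem_Icc] at hjjmem
    have hsubn : B.gran n ⊆ G₁.gran jj := habs n jj t ht htj
    exact ⟨hi, hmain i hi i'' hnx n jj hn1 hn2 hjjmem.1 hjjmem.2 hsubn⟩
  constructor
  · intro hc
    ext i
    constructor
    · intro hmem
      obtain ⟨hi, hcase⟩ := hfwd i hmem
      rcases hcase with ⟨m, h1, h2, h3⟩ | ⟨hne', -, -⟩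
      · exact ⟨hi, m, h1, h2, h3⟩
      · exact absurd hc hne'
    · intro hmem
      exact hsub21 hmem
  · intro hc lG2' hg
    have hlG2'mem : lG2' ∈ G₂.labels := hg.1.1
    have hlG2'lt : lG2' < lG2 := hg.1.2
    have hwlg1 : ∀ w ∈ G₂.labels, w < lG2 → w ≤ lG1 := by
      intro w hw hwlt
      by_contra hgt; push_neg at hgt
      obtain ⟨mw, hmw⟩ := hsupp1 w
      have hn₁mw : n₁ < mw := by
        by_contra hle'; push_neg at hle'
        have := upm hmw hn₁sub hle'
        omega
      have hmw2 : B.gran mw ⊆ G₂.gran w := by rw [hEq w hw]; exact hmw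
      have := upm hn₂sub hmw (hmin₂' mw (by omega) w hw hmw2)
      omega
    have hlG2'le : lG2' ≤ lG1 := hwlg1 lG2' hlG2'mem hlG2'lt
    have hl12' : lG1 < lG2 := lt_of_le_of_ne hl12 (fun h => hc h.symm)
    have hnxt2 : IsLeast {w ∈ G₂.labels | lG2' < w} lG2 := by
      refine ⟨⟨hlG2mem, hlG2'lt⟩, ?_⟩
      intro w hw
      obtain ⟨hw1, hw2⟩ := hw
      by_contra hlt; push_neg at hlt
      have := hg.2 ⟨hw1, hlt⟩
      omega
    have hl2'mem : lG2' ∈ LHat B G' ((Int.lcm P₁ P₂ : ℤ)) := by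
      refine ⟨by rw [hlab]; exact hlG2'mem, n₁, by omega, hn₁P', ?_⟩
      rw [hgran lG2' (by rw [hlab]; exact hlG2'mem) lG2 hnxt2]
      intro t ht
      simp only [Set.mem_iUnion]
      exact ⟨lG1, Finset.mem_Icc.mpr (by omega), hn₁sub ht⟩
    ext i
    constructor
    · intro hmem
      obtain ⟨hi, hcase⟩ := hfwd i hmem
      rcases hcase with ⟨m, h1, h2, h3⟩ | ⟨-, hilt, hmax⟩
      · exact Set.mem_insert_iff.mpr (Or.inr ⟨hi, m, h1, h2, h3⟩)
      · have hle1 : i ≤ lG2' := hg.2 ⟨hi, hilt⟩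
        have hle2 : lG2' ≤ i := hmax lG2' hlG2'mem hlG2'lt
        exact Set.mem_insert_iff.mpr (Or.inl (by omega))
    · intro hmem
      rcases Set.mem_insert_iff.mp hmem with rfl | hmem2
      · exact hl2'mem
      · exact hsub21 hmem2
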